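/- Let $R$ be a commutative ring, and for $j \geq 1$ let $x_1, x_2, \dots \in R$. For integers $i > j \geq 1$, the identity $\sum_{k=j}^{i} (-1)^{i-k}\, e_{i-k}(x_1,\dots,x_{i-1})\, h_{k-j}(x_1,\dots,x_j) = 0$ holds, where $e_r$ and $h_r$ denote respectively the elementary and complete homogeneous symmetric polynomials (with $e_0 = h_0 = 1$). -/

import Mathlib

open Finset Polynomial

/-- Complete homogeneous symmetric polynomial `h_r(x_1,…,x_k)`. -/
def hpoly {R : Type*} [CommSemiring R] (r : ℕ) {k : ℕ} (x : Fin k → R) : R :=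
  ∑ α ∈ Finset.Nat.antidiagonalTuple k r, ∏ i, x i ^ α i

/-- Elementary symmetric polynomial `e_r(x_1,…,x_k)`. -/
def epoly {R : Type*} [CommSemiring R] (r : ℕ) {k : ℕ} (x : Fin k → R) : R :=
  ∑ s ∈ Finset.powersetCard r (Finset.univ : Finset (Fin k)), ∏ i ∈ s, x i

/-- Lower unitriangular transformation matrix `T` with `T j k = h_{j-k}(λ_1,…,λ_k)`. -/
def Tmat {R : Type*} [CommSemiring R] {m : ℕ} (lam : Fin m → R) : Matrix (Fin m) (Fin m) R :=
  Matrix.of fun j k : Fin m =>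
    if (k:ℕ) ≤ (j:ℕ) then
      hpoly ((j:ℕ) - (k:ℕ)) (fun i : Fin ((k:ℕ)+1) => lam (Fin.castLE k.isLt i))
    else 0
namespace OrthAux

variable {R : Type*} [CommRing R]

def Ee (x : ℕ → R) (N m : ℕ) : R := epoly m (fun t : Fin N => x (t : ℕ))

def Hh (x : ℕ → R) (j r : ℕ) : R := hpoly r (fun t : Fin j => x (t : ℕ))

@[simp] lemma Ee_zero (x : ℕ → R) (N : ℕ) : Ee x N 0 = 1 := by
  simp [Ee, epoly]

@[simp] lemma Hh_zero (x : ℕ → R) (j : ℕ) : Hh x j 0 = 1 := by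
  simp [Hh, hpoly, Finset.Nat.antidiagonalTuple_zero_right]

@[simp] lemma Hh_zero_vars (x : ℕ → R) (r : ℕ) : Hh x 0 (r + 1) = 0 := by
  simp [Hh, hpoly, Finset.Nat.antidiagonalTuple_zero_succ]

lemma Ee_eq_zero (x : ℕ → R) {N m : ℕ} (h : N < m) : Ee x N m = 0 := by
  rw [Ee, epoly, Finset.powersetCard_eq_empty.mpr (by simpa using h), Finset.sum_empty]

lemma univ_succ_eq (N : ℕ) : (univ : Finset (Fin (N + 1))) =
    insert (Fin.last N) ((univ : Finset (Fin N)).map Fin.castSuccEmb) := by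
  ext i
  simp only [mem_univ, mem_insert, mem_map, true_iff]
  rcases Fin.eq_castSucc_or_eq_last i with ⟨j, rfl⟩ | rfl
  · exact Or.inr ⟨j, by simp [Fin.ext_iff]⟩
  · exact Or.inl rfl

lemma Ee_succ (x : ℕ → R) (N m : ℕ) :
    Ee x (N + 1) (m + 1) = Ee x N (m + 1) + x N * Ee x N m := by
  classical
  set S := (univ : Finset (Fin N)).map Fin.castSuccEmb with hS
  have hlast : Fin.last N ∉ S := by
    rw [hS, Finset.mem_map]
    rintro ⟨j, -, hj⟩
    exact (Fin.castSucc_lt_last j).ne hj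
  have hdisj : Disjoint (powersetCard (m + 1) S)
      ((powersetCard m S).image (insert (Fin.last N))) := by
    rw [Finset.disjoint_left]
    rintro a ha hb
    rw [Finset.mem_image] at hb
    obtain ⟨t, ht, rfl⟩ := hb
    rw [Finset.mem_powersetCard] at ha
    exact hlast (ha.1 (Finset.mem_insert_self _ _))
  have key : ∀ r : ℕ, ∑ s ∈ powersetCard r S, ∏ i ∈ s, x (i : ℕ) = Ee x N r := by
    intro r
    rw [hS, Finset.powersetCard_map, Finset.sum_map]
    refine Finset.sum_congr rfl fun s _ => ?_
    rw [show (Finset.mapEmbedding Fin.castSuccEmb).toEmbedding s = s.map Fin.castSuccEmb from rfl,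
      Finset.prod_map]
    simp
  rw [Ee, epoly, univ_succ_eq, Finset.powersetCard_succ_insert hlast,
    Finset.sum_union hdisj, key]
  congr 1
  rw [Finset.sum_image (fun t₁ h₁ t₂ h₂ h => by
    have l₁ : Fin.last N ∉ t₁ := fun hx => hlast ((Finset.mem_powersetCard.mp h₁).1 hx)
    have l₂ : Fin.last N ∉ t₂ := fun hx => hlast ((Finset.mem_powersetCard.mp h₂).1 hx)
    rw [← Finset.erase_insert l₁, ← Finset.erase_insert l₂, h])]
  rw [← key m, Finset.mul_sum]
  refine Finset.sum_congr rfl fun t ht => ?_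
  have lt : Fin.last N ∉ t := fun hx => hlast ((Finset.mem_powersetCard.mp ht).1 hx)
  rw [Finset.prod_insert lt, Fin.val_last]

lemma Hh_succ_expand (x : ℕ → R) (k n : ℕ) :
    Hh x (k + 1) n = ∑ p ∈ Finset.HasAntidiagonal.antidiagonal n, x k ^ p.2 * Hh x k p.1 := by
  simp only [Hh, hpoly, Finset.mul_sum]
  rw [Finset.sum_sigma']
  refine Finset.sum_nbij'
    (fun α => ⟨(∑ i : Fin k, α i.castSucc, α (Fin.last k)), fun i => α i.castSucc⟩)
    (fun q => Fin.snoc q.2 q.1.2) ?_ ?_ ?_ ?_ ?_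
  · intro α hα
    rw [Finset.Nat.mem_antidiagonalTuple] at hα
    rw [Finset.mem_sigma, Finset.HasAntidiagonal.mem_antidiagonal, Finset.Nat.mem_antidiagonalTuple]
    refine ⟨?_, rfl⟩
    rw [← hα, Fin.sum_univ_castSucc]
  · intro q hq
    rw [Finset.mem_sigma, Finset.HasAntidiagonal.mem_antidiagonal, Finset.Nat.mem_antidiagonalTuple] at hq
    rw [Finset.Nat.mem_antidiagonalTuple, Fin.sum_univ_castSucc]
    simp only [Fin.snoc_castSucc, Fin.snoc_last]
    rw [hq.2, hq.1]
  · intro α _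
    exact Fin.snoc_init_self α
  · intro q hq
    rw [Finset.mem_sigma, Finset.HasAntidiagonal.mem_antidiagonal, Finset.Nat.mem_antidiagonalTuple] at hq
    refine Sigma.ext ?_ (by simp)
    simp only [Fin.snoc_castSucc, Fin.snoc_last]
    rw [hq.2]
  · intro α _
    rw [Fin.prod_univ_castSucc]
    simp only [Fin.coe_castSucc, Fin.val_last]
    ring

lemma Hh_succ (x : ℕ → R) (j r : ℕ) :
    Hh x (j + 1) (r + 1) = Hh x j (r + 1) + x j * Hh x (j + 1) r := by
  rw [Hh_succ_expand, Finset.Nat.antidiagonal_succ', Finset.sum_cons, Finset.sum_map]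
  simp only [Function.Embedding.prodMap, Function.Embedding.coeFn_mk, Prod.map,
    Function.Embedding.refl_apply, pow_zero, one_mul, pow_succ]
  rw [Hh_succ_expand x j r, Finset.mul_sum]
  congr 1
  refine Finset.sum_congr rfl fun p _ => ?_
  ring

lemma Hh_one_eq_Ee_one (x : ℕ → R) (j : ℕ) : Hh x j 1 = Ee x j 1 := by
  induction j with
  | zero => rw [Hh_zero_vars, Ee_eq_zero x (by omega)]
  | succ j ih =>
    have h1 : Hh x (j + 1) 1 = Hh x j 1 + x j * Hh x (j + 1) 0 := Hh_succ x j 0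
    have h2 : Ee x (j + 1) 1 = Ee x j 1 + x j * Ee x j 0 := Ee_succ x j 0
    rw [h1, h2, ih, Hh_zero, Ee_zero]

lemma key (x : ℕ → R) : ∀ c N j n, N + j + n ≤ c → j ≤ N → N - j < n →
    ∑ m ∈ Finset.range (n + 1), (-1 : R) ^ m * Ee x N m * Hh x j (n - m) = 0 := by
  intro c
  induction c with
  | zero => intro N j n h hjN hn; omega
  | succ c ih =>
    intro N j n hc hjN hn
    rcases Nat.lt_or_ge j N with hlt | hge
    · -- case j < N
      obtain ⟨N', rfl⟩ : ∃ N', N = N' + 1 := ⟨N - 1, by omega⟩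
      have hn2 : 2 ≤ n := by omega
      have hB := ih N' j n (by omega) (by omega) (by omega)
      have hC := ih N' j (n - 1) (by omega) (by omega) (by omega)
      have main : ∑ m ∈ Finset.range (n + 1), (-1 : R) ^ m * Ee x (N' + 1) m * Hh x j (n - m)
          = (∑ m ∈ Finset.range (n + 1), (-1 : R) ^ m * Ee x N' m * Hh x j (n - m))
            - x N' * ∑ m ∈ Finset.range (n - 1 + 1),
                (-1 : R) ^ m * Ee x N' m * Hh x j (n - 1 - m) := by
        have hn' : n - 1 + 1 = n := by omega
        rw [hn',
          Finset.sum_range_succ' (fun m => (-1 : R) ^ m * Ee x (N' + 1) m * Hh x j (n - m)) n,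
          Finset.sum_range_succ' (fun m => (-1 : R) ^ m * Ee x N' m * Hh x j (n - m)) n,
          Finset.mul_sum]
        have hstep : ∀ m ∈ Finset.range n,
            (-1 : R) ^ (m + 1) * Ee x (N' + 1) (m + 1) * Hh x j (n - (m + 1))
            = (-1 : R) ^ (m + 1) * Ee x N' (m + 1) * Hh x j (n - (m + 1))
              - x N' * ((-1 : R) ^ m * Ee x N' m * Hh x j (n - 1 - m)) := by
          intro m _
          have e : n - (m + 1) = n - 1 - m := by omega
          rw [Ee_succ, e]
          ring
        rw [Finset.sum_congr rfl hstep, Finset.sum_sub_distrib]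
        simp only [Ee_zero, pow_zero, one_mul, Nat.sub_zero]
        ring
      rw [main, hB, hC]
      ring
    · -- case j = N
      have hjN' : j = N := le_antisymm hjN hge
      subst hjN'
      rcases Nat.lt_or_ge n 2 with hn1 | hn2
      · have : n = 1 := by omega
        subst this
        rw [Finset.sum_range_succ, Finset.sum_range_one]
        simp only [pow_zero, one_mul, pow_one, Nat.sub_self, Hh_zero, mul_one, Nat.sub_zero,
          Ee_zero]
        rw [Hh_one_eq_Ee_one]
        ring
      · rcases Nat.eq_zero_or_pos j with hj0 | hjpos
        · subst hj0
          refine Finset.sum_eq_zero fun m hm => ?_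
          rcases Nat.eq_zero_or_pos m with rfl | hmpos
          · have h' : n - 0 = (n - 1) + 1 := by omega
            rw [h', Hh_zero_vars, mul_zero]
          · rw [Ee_eq_zero x (by omega)]
            ring
        · obtain ⟨j', rfl⟩ : ∃ j', j = j' + 1 := ⟨j - 1, by omega⟩
          have hB := ih (j' + 1) j' n (by omega) (by omega) (by omega)
          have hC := ih (j' + 1) (j' + 1) (n - 1) (by omega) (by omega) (by omega)
          have main : ∑ m ∈ Finset.range (n + 1),
                (-1 : R) ^ m * Ee x (j' + 1) m * Hh x (j' + 1) (n - m)
              = (∑ m ∈ Finset.range (n + 1),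
                  (-1 : R) ^ m * Ee x (j' + 1) m * Hh x j' (n - m))
                + x j' * ∑ m ∈ Finset.range (n - 1 + 1),
                    (-1 : R) ^ m * Ee x (j' + 1) m * Hh x (j' + 1) (n - 1 - m) := by
            have hn' : n - 1 + 1 = n := by omega
            rw [hn',
              Finset.sum_range_succ
                (fun m => (-1 : R) ^ m * Ee x (j' + 1) m * Hh x (j' + 1) (n - m)) n,
              Finset.sum_range_succ
                (fun m => (-1 : R) ^ m * Ee x (j' + 1) m * Hh x j' (n - m)) n,
              Finset.mul_sum]
            have hstep : ∀ m ∈ Finset.range n,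
                (-1 : R) ^ m * Ee x (j' + 1) m * Hh x (j' + 1) (n - m)
                = (-1 : R) ^ m * Ee x (j' + 1) m * Hh x j' (n - m)
                  + x j' * ((-1 : R) ^ m * Ee x (j' + 1) m * Hh x (j' + 1) (n - 1 - m)) := by
              intro m hm
              rw [Finset.mem_range] at hm
              have e : n - m = (n - 1 - m) + 1 := by omega
              rw [e, Hh_succ]
              have e' : n - 1 - m + 1 - 1 = n - 1 - m := by omega
              ring
            rw [Finset.sum_congr rfl hstep, Finset.sum_add_distrib]
            rw [Nat.sub_self, Hh_zero, Hh_zero]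
            simp only [mul_one]
            ring
          rw [main, hB, hC]
          ring

end OrthAux

/-- `∑_{k=j}^{i} (-1)^{i-k} e_{i-k}(x_1,…,x_{i-1}) h_{k-j}(x_1,…,x_j) = 0` for `i > j ≥ 1`.
Here `x 0 = x_1`, etc. -/
theorem esymm_hsymm_orthogonality {R : Type*} [CommRing R] (x : ℕ → R)
    (i j : ℕ) (hj : 1 ≤ j) (hij : j < i) :
    ∑ k ∈ Finset.Icc j i,
      (-1 : R) ^ (i - k) * epoly (i - k) (fun t : Fin (i - 1) => x (t : ℕ))
        * hpoly (k - j) (fun t : Fin j => x (t : ℕ)) = 0 := by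
  have hkey := OrthAux.key x (i - 1 + j + (i - j)) (i - 1) j (i - j) le_rfl (by omega) (by omega)
  refine Eq.trans ?_ hkey
  refine Finset.sum_nbij' (fun k => i - k) (fun m => i - m) ?_ ?_ ?_ ?_ ?_
  · intro k hk; simp only [Finset.mem_Icc] at hk; simp only [Finset.mem_range]; omega
  · intro m hm; simp only [Finset.mem_range] at hm; simp only [Finset.mem_Icc]; omega
  · intro k hk; simp only [Finset.mem_Icc] at hk; omega
  · intro m hm; simp only [Finset.mem_range] at hm; omega
  · intro k hk
    simp only [Finset.mem_Icc] at hk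
    have e : i - j - (i - k) = k - j := by omega
    rw [OrthAux.Ee, OrthAux.Hh, e]
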